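/- arXiv:1306.0167 — 2 statements merged into one kernel-verified Lean document; each statement's English description precedes it below -/
import Mathlib

section
/- If D_j(x) = 0 for only finitely many j, then the local level set L_x^loc is finite; if D_j(x) = 0 for infinitely many j, then L_x^loc is uncountable. -/
open Set

/-- `phi x` is the distance from `x` to the nearest integer. -/
noncomputable def phi (x : ℝ) : ℝ := min (Int.fract x) (1 - Int.fract x)

/-- The Takagi function. -/
noncomputable def T (x : ℝ) : ℝ := ∑' n : ℕ, (1/2 : ℝ)^n * phi (2^n * x)

/-- The `j`-th binary digit of `x ∈ [0,1)` (terminating expansion for dyadics). -/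
noncomputable def eps (x : ℝ) (j : ℕ) : ℤ := ⌊2^j * x⌋ % 2

/-- `D k x = ∑_{j=1}^k (-1)^{ε_j(x)}`. -/
noncomputable def D (k : ℕ) (x : ℝ) : ℤ :=
  ∑ j ∈ Finset.Icc 1 k, (-1 : ℤ)^((eps x j).toNat)

/-- `x₀` is a balanced dyadic rational of order `m`. -/
def BalancedDyadic (m : ℕ) (x₀ : ℝ) : Prop :=
  x₀ ∈ Set.Ico (0:ℝ) 1 ∧ (∃ k : ℕ, x₀ = (k : ℝ) / 4^m) ∧ D (2*m) x₀ = 0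

/-- The generation of a balanced dyadic rational of order `m`. -/
noncomputable def generation (m : ℕ) (x₀ : ℝ) : ℕ :=
  ((Finset.Icc 1 (2*m)).filter (fun j => D j x₀ = 0)).card

/-- The local level set of `x`. -/
def LocalLevelSet (x : ℝ) : Set ℝ :=
  {x' ∈ Set.Ico (0:ℝ) 1 | ∀ j : ℕ, |D j x'| = |D j x|}

/-- The level set of `T` at level `y`. -/
def L (y : ℝ) : Set ℝ := {x ∈ Set.Icc (0:ℝ) 1 | T x = y}

/-! ### Auxiliary lemmas about binary digits -/

lemma eps_mem (x : ℝ) (j : ℕ) : eps x j = 0 ∨ eps x j = 1 := Int.emod_two_eq _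

lemma floor_succ (x : ℝ) (j : ℕ) : ⌊2^(j+1) * x⌋ = 2 * ⌊2^j * x⌋ + eps x (j+1) := by
  have h1 : (2 * ⌊2^j * x⌋ : ℤ) ≤ ⌊2^(j+1) * x⌋ := by
    apply Int.le_floor.2
    rw [show (2:ℝ)^(j+1) = 2 * 2^j by ring]
    push_cast
    linarith [Int.floor_le (2^j * x)]
  have h2 : ⌊2^(j+1) * x⌋ < 2 * ⌊2^j * x⌋ + 2 := by
    apply Int.floor_lt.2
    rw [show (2:ℝ)^(j+1) = 2 * 2^j by ring]
    push_cast
    linarith [Int.lt_floor_add_one (2^j * x)]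
  unfold eps
  omega

lemma eps_injective {x y : ℝ} (hx : x ∈ Set.Ico (0:ℝ) 1) (hy : y ∈ Set.Ico (0:ℝ) 1)
    (h : ∀ j, eps x j = eps y j) : x = y := by
  have hfl : ∀ j : ℕ, ⌊2^j * x⌋ = ⌊2^j * y⌋ := by
    intro j
    induction j with
    | zero => simp [Int.floor_eq_zero_iff, hx.1, hx.2, hy.1, hy.2,
        Int.floor_eq_zero_iff.2 (show x ∈ Set.Ico (0:ℝ) 1 from hx),
        Int.floor_eq_zero_iff.2 (show y ∈ Set.Ico (0:ℝ) 1 from hy)]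
    | succ n ih => rw [floor_succ, floor_succ, ih, h]
  by_contra hne
  have habs : 0 < |x - y| := abs_pos.2 (sub_ne_zero.2 hne)
  obtain ⟨n, hn⟩ := pow_unbounded_of_one_lt (1 / |x - y|) (by norm_num : (1:ℝ) < 2)
  have h1 : (1:ℝ) < 2^n * |x - y| := by
    rw [div_lt_iff₀ habs] at hn; linarith [hn]
  have hax : (⌊2^n * x⌋ : ℝ) ≤ 2^n * x := Int.floor_le _
  have hbx : 2^n * x < ⌊2^n * x⌋ + 1 := Int.lt_floor_add_one _
  have hay : (⌊2^n * y⌋ : ℝ) ≤ 2^n * y := Int.floor_le _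
  have hby : 2^n * y < ⌊2^n * y⌋ + 1 := Int.lt_floor_add_one _
  rw [hfl n] at hax hbx
  have h2 : |2^n * x - 2^n * y| < 1 := by
    rw [abs_lt]; constructor <;> linarith
  rw [show 2^n * x - 2^n * y = 2^n * (x - y) by ring, abs_mul,
    abs_of_pos (by positivity : (0:ℝ) < 2^n)] at h2
  linarith

/-! ### Realizing a digit sequence as a real number -/

noncomputable def digitReal (e : ℕ → ℤ) : ℝ := ∑' j : ℕ, (e (j+1) : ℝ) / 2^(j+1)

section digits
variable {e : ℕ → ℤ}

lemma summable_half : Summable (fun j : ℕ => (1/2:ℝ)^(j+1)) :=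
  (summable_geometric_two).mul_left (1/2) |>.congr (by intro n; simp [pow_succ, mul_comm])

lemma digit_le (h01 : ∀ j, e j = 0 ∨ e j = 1) (c : ℕ) (j : ℕ) :
    (e (j+c+1) : ℝ) / 2^(j+1) ≤ (1/2:ℝ)^(j+1) := by
  rw [div_pow, one_pow]
  apply div_le_div_of_nonneg_right ?_ (by positivity)
  · rcases h01 (j+c+1) with h|h <;> rw [h] <;> norm_num

lemma digit_nonneg (h01 : ∀ j, e j = 0 ∨ e j = 1) (c : ℕ) (j : ℕ) :
    (0:ℝ) ≤ (e (j+c+1) : ℝ) / 2^(j+1) := by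
  rcases h01 (j+c+1) with h|h <;> rw [h] <;> positivity

lemma summable_digit (h01 : ∀ j, e j = 0 ∨ e j = 1) (c : ℕ) :
    Summable (fun j : ℕ => (e (j+c+1) : ℝ) / 2^(j+1)) :=
  Summable.of_nonneg_of_le (digit_nonneg h01 c) (digit_le h01 c) summable_half

lemma digitReal_floor (h01 : ∀ j, e j = 0 ∨ e j = 1) (hinf : ∀ k, ∃ m, k < m ∧ e m = 0) (k : ℕ) :
    ⌊2^k * digitReal e⌋ = ∑ j ∈ Finset.range k, e (j+1) * 2^(k-1-j) := by
  have hsum : Summable (fun j : ℕ => (e (j+1) : ℝ) / 2^(j+1)) := by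
    simpa using summable_digit h01 0
  have hsplit := (Summable.sum_add_tsum_nat_add k hsum).symm
  set t : ℝ := ∑' j : ℕ, (e (j+k+1) : ℝ) / 2^(j+1) with ht
  have key : 2^k * digitReal e = (∑ j ∈ Finset.range k, (e (j+1):ℝ) * 2^(k-1-j)) + t := by
    rw [digitReal, hsplit, mul_add]
    congr 1
    · rw [Finset.mul_sum]
      apply Finset.sum_congr rfl
      intro j hj
      have hjk : j + 1 ≤ k := Finset.mem_range.1 hj
      rw [mul_comm ((e (j+1):ℝ)), ← mul_div_assoc, mul_comm ((2:ℝ)^k)]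
      rw [mul_div_assoc, mul_comm]
      congr 1
      rw [div_eq_iff (by positivity : ((2:ℝ)^(j+1)) ≠ 0), ← pow_add]
      congr 1
      omega
    · rw [ht, ← tsum_mul_left]
      apply tsum_congr
      intro j
      have h2 : (2:ℝ)^(j+k+1) = 2^k * 2^(j+1) := by rw [← pow_add]; congr 1; omega
      rw [h2]
      field_simp
  have ht0 : 0 ≤ t := tsum_nonneg (digit_nonneg h01 k)
  have ht1 : t < 1 := by
    obtain ⟨m, hm, hm0⟩ := hinf k
    have hlt : t < ∑' j : ℕ, (1/2:ℝ)^(j+1) := by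
      apply Summable.tsum_lt_tsum (i := m - k - 1) (digit_le h01 k) _ (summable_digit h01 k) summable_half
      rw [show m - k - 1 + k + 1 = m by omega, hm0]
      norm_num
    have hone : ∑' j : ℕ, (1/2:ℝ)^(j+1) = 1 := by
      rw [show (fun j : ℕ => (1/2:ℝ)^(j+1)) = (fun n : ℕ => 1/2/2^n) by
        funext j; rw [pow_succ, div_pow, one_pow]; ring]
      exact tsum_geometric_two' 1
    linarith
  have heq : 2^k * digitReal e = ((∑ j ∈ Finset.range k, e (j+1) * 2^(k-1-j) : ℤ) : ℝ) + t := by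
    rw [key]; push_cast; ring
  rw [heq, Int.floor_intCast_add, Int.floor_eq_zero_iff.2 ⟨ht0, ht1⟩, add_zero]

lemma digitReal_mem (h01 : ∀ j, e j = 0 ∨ e j = 1) (hinf : ∀ k, ∃ m, k < m ∧ e m = 0) :
    digitReal e ∈ Set.Ico (0:ℝ) 1 := by
  have h0 := digitReal_floor h01 hinf 0
  rw [pow_zero, one_mul] at h0
  simp only [Finset.range_zero, Finset.sum_empty] at h0
  exact Int.floor_eq_zero_iff.1 h0

lemma digitReal_eps (h01 : ∀ j, e j = 0 ∨ e j = 1) (hinf : ∀ k, ∃ m, k < m ∧ e m = 0)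
    (k : ℕ) (hk : 1 ≤ k) : eps (digitReal e) k = e k := by
  obtain ⟨n, rfl⟩ : ∃ n, k = n + 1 := ⟨k - 1, by omega⟩
  unfold eps
  rw [digitReal_floor h01 hinf (n+1), Finset.sum_range_succ]
  have hd : (2:ℤ) ∣ ∑ j ∈ Finset.range n, e (j+1) * 2^(n+1-1-j) := by
    apply Finset.dvd_sum
    intro j hj
    exact dvd_mul_of_dvd_right (dvd_pow_self 2 (by have := Finset.mem_range.1 hj; omega)) _
  obtain ⟨c, hc⟩ := hd
  rw [hc, show n+1-1-n = 0 by omega, pow_zero, mul_one]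
  rcases h01 (n+1) with h|h <;> rw [h] <;> omega

end digits

/-! ### The flipped digit sequences -/

noncomputable def cntz (x : ℝ) (j : ℕ) : ℕ := Nat.count (fun i => D i x = 0) j

noncomputable def dig (x : ℝ) (b : ℕ → Bool) (j : ℕ) : ℤ :=
  if b (cntz x j - 1) then 1 - eps x j else eps x j

lemma dig01 (x : ℝ) (b : ℕ → Bool) (j : ℕ) : dig x b j = 0 ∨ dig x b j = 1 := by
  rcases eps_mem x j with h|h <;> by_cases hf : b (cntz x j - 1) <;> simp [dig, h, hf]

lemma sign_dig (x : ℝ) (b : ℕ → Bool) (j : ℕ) :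
    ((-1:ℤ)^((dig x b j).toNat)) =
      (if b (cntz x j - 1) then -1 else 1) * (-1:ℤ)^((eps x j).toNat) := by
  rcases eps_mem x j with h|h <;> by_cases hf : b (cntz x j - 1) <;>
    simp [dig, h, hf]

lemma dig_key (x : ℝ) (b : ℕ → Bool) (k : ℕ) :
    ∑ j ∈ Finset.Icc 1 k, (-1:ℤ)^((dig x b j).toNat) =
      (if b (cntz x (k+1) - 1) then -1 else 1) * D k x := by
  induction k with
  | zero => simp [D]
  | succ k ih =>
    rw [Finset.sum_Icc_succ_top (by omega : 1 ≤ k+1), ih, sign_dig]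
    have hD : D (k+1) x = D k x + (-1:ℤ)^((eps x (k+1)).toNat) := by
      rw [D, D, Finset.sum_Icc_succ_top (by omega : 1 ≤ k+1)]
    by_cases hz : D (k+1) x = 0
    · rw [hz, mul_zero]
      have : D k x = -((-1:ℤ)^((eps x (k+1)).toNat)) := by omega
      rw [this]; ring
    · have hcnt : cntz x (k+2) = cntz x (k+1) := by
        unfold cntz
        rw [Nat.count_succ, if_neg hz, add_zero]
      rw [hcnt, hD]
      ring
  
lemma dig_abs (x : ℝ) (b : ℕ → Bool) (k : ℕ) :
    |∑ j ∈ Finset.Icc 1 k, (-1:ℤ)^((dig x b j).toNat)| = |D k x| := by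
  rw [dig_key, abs_mul]
  have : |(if b (cntz x (k+1) - 1) then (-1:ℤ) else 1)| = 1 := by split <;> simp
  rw [this, one_mul]

lemma dig_inf (x : ℝ) (hinf : {j : ℕ | D j x = 0}.Infinite) (b : ℕ → Bool) :
    ∀ k, ∃ m, k < m ∧ dig x b m = 0 := by
  intro k
  by_contra h
  push_neg at h
  have hone : ∀ m, k < m → dig x b m = 1 := fun m hm => (dig01 x b m).resolve_left (h m hm)
  obtain ⟨k1, hk1S, hk1⟩ := hinf.exists_gt k
  obtain ⟨k2, hk2S, hk2⟩ := hinf.exists_gt k1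
  have hsplit := Finset.sum_Ioc_consecutive (fun j => (-1:ℤ)^((dig x b j).toNat))
    (Nat.zero_le k1) (le_of_lt hk2)
  rw [← (Finset.Icc_add_one_left_eq_Ioc 0 k1 : Finset.Icc (Nat.succ 0) k1 = _),
    ← (Finset.Icc_add_one_left_eq_Ioc 0 k2 : Finset.Icc (Nat.succ 0) k2 = _)] at hsplit
  change ∑ j ∈ Finset.Icc (Nat.succ 0) k1, (-1:ℤ)^((dig x b j).toNat) + ∑ j ∈ Finset.Ioc k1 k2, (-1:ℤ)^((dig x b j).toNat) = ∑ j ∈ Finset.Icc (Nat.succ 0) k2, (-1:ℤ)^((dig x b j).toNat) at hsplit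
  have hconst : ∑ j ∈ Finset.Ioc k1 k2, (-1:ℤ)^((dig x b j).toNat) = -((k2 - k1 : ℕ) : ℤ) := by
    have hterm : ∀ j ∈ Finset.Ioc k1 k2, (-1:ℤ)^((dig x b j).toNat) = -1 := by
      intro j hj
      have hj1 := (Finset.mem_Ioc.1 hj).1
      rw [hone j (by omega)]
      norm_num
    rw [Finset.sum_congr rfl hterm, Finset.sum_const, Nat.card_Ioc]
    simp
  have h1 : ∑ j ∈ Finset.Icc (Nat.succ 0) k1, (-1:ℤ)^((dig x b j).toNat) = 0 := by
    have := dig_key x b k1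
    have hz1 : D k1 x = 0 := hk1S
    rw [hz1, mul_zero] at this
    simpa using this
  have h2 : ∑ j ∈ Finset.Icc (Nat.succ 0) k2, (-1:ℤ)^((dig x b j).toNat) = 0 := by
    have := dig_key x b k2
    have hz2 : D k2 x = 0 := hk2S
    rw [hz2, mul_zero] at this
    simpa using this
  rw [h1, h2, hconst] at hsplit
  have : (k2 - k1 : ℕ) = 0 := by omega
  omega

noncomputable def FF (x : ℝ) (b : ℕ → Bool) : ℝ := digitReal (dig x b)

lemma not_countable_funBool : ¬ Countable (ℕ → Bool) := by
  intro hcnt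
  have h1 : Countable (ℕ → Prop) :=
    Countable.of_equiv _ (Equiv.piCongrRight fun _ => Equiv.propEquivBool).symm
  have h2 : Countable (Set ℕ) := h1
  obtain ⟨f, hf⟩ := exists_injective_nat (Set ℕ)
  exact Function.cantor_injective f hf

theorem local_level_set_finite_or_uncountable (x : ℝ) (hx : x ∈ Set.Ico (0:ℝ) 1) :
    ({j : ℕ | D j x = 0}.Finite → (LocalLevelSet x).Finite) ∧
    ({j : ℕ | D j x = 0}.Infinite → ¬ (LocalLevelSet x).Countable) := by
  constructor
  · -- finite case
    intro hfin
    obtain ⟨N, hN⟩ := hfin.bddAbove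
    have hfin2 : Finite ↥(LocalLevelSet x) := by
      let G : ↥(LocalLevelSet x) → (Fin (N+2) → Bool) := fun x' i => decide (eps x'.1 i = 1)
      apply Finite.of_injective G
      intro x' x'' hG
      have hbase : ∀ i : ℕ, i ≤ N + 1 → eps x'.1 i = eps x''.1 i := by
        intro i hiN
        have hGi := congrFun hG ⟨i, by omega⟩
        simp only [G, decide_eq_decide] at hGi
        rcases eps_mem x'.1 i with h|h <;> rcases eps_mem x''.1 i with h2|h2 <;>
          simp [h, h2] at hGi ⊢
      have hall : ∀ j, eps x'.1 j = eps x''.1 j := by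
        intro j
        induction j using Nat.strong_induction_on with
        | _ j ih =>
          by_cases hj : j ≤ N + 1
          · exact hbase j hj
          · obtain ⟨j', rfl⟩ : ∃ j', j = j' + 1 := ⟨j - 1, by omega⟩
            have hDeq : D j' x'.1 = D j' x''.1 := by
              rw [D, D]
              exact Finset.sum_congr rfl fun i hi => by
                rw [ih i (by have := (Finset.mem_Icc.1 hi).2; omega)]
            have hDx : D j' x ≠ 0 := by
              intro h0
              have := hN (show j' ∈ {j : ℕ | D j x = 0} from h0)
              omega
            have habs' := x'.2.2 j'
            have hA : D j' x'.1 ≠ 0 := by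
              intro h0
              rw [h0] at habs'
              simp only [abs_zero] at habs'
              exact hDx (abs_eq_zero.1 habs'.symm)
            have hsucc' : D (j'+1) x'.1 = D j' x'.1 + (-1:ℤ)^((eps x'.1 (j'+1)).toNat) := by
              rw [D, D, Finset.sum_Icc_succ_top (by omega : 1 ≤ j'+1)]
            have hsucc'' : D (j'+1) x''.1 = D j' x''.1 + (-1:ℤ)^((eps x''.1 (j'+1)).toNat) := by
              rw [D, D, Finset.sum_Icc_succ_top (by omega : 1 ≤ j'+1)]
            have hb1 := x'.2.2 (j'+1)
            have hb2 := x''.2.2 (j'+1)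
            have hcomb : |D (j'+1) x'.1| = |D (j'+1) x''.1| := hb1.trans hb2.symm
            rw [hsucc', hsucc'', hDeq] at hcomb
            rcases eps_mem x'.1 (j'+1) with h|h <;> rcases eps_mem x''.1 (j'+1) with g|g <;>
                rw [h, g] <;> rw [h, g] at hcomb <;> exfalso <;>
                simp only [Int.toNat_zero, pow_zero, Int.toNat_one, pow_one] at hcomb <;>
                rcases abs_eq_abs.1 hcomb with hc|hc <;> omega
      exact Subtype.ext (eps_injective x'.2.1 x''.2.1 hall)
    exact Set.finite_coe_iff.1 hfin2
  · -- infinite case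
    intro hinf hC
    have hmem : ∀ b, FF x b ∈ LocalLevelSet x := by
      intro b
      have h01 := dig01 x b
      have hi := dig_inf x hinf b
      refine ⟨digitReal_mem h01 hi, ?_⟩
      intro j
      have hD : D j (FF x b) = ∑ i ∈ Finset.Icc 1 j, (-1:ℤ)^((dig x b i).toNat) := by
        rw [D]
        apply Finset.sum_congr rfl
        intro i hi2
        rw [show FF x b = digitReal (dig x b) from rfl,
          digitReal_eps h01 hi i (Finset.mem_Icc.1 hi2).1]
      rw [hD, dig_abs]
    have hinj : Function.Injective (FF x) := by
      intro b b' hbb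
      by_contra hne
      obtain ⟨i, hi⟩ := Function.ne_iff.1 hne
      set p := fun i => D i x = 0 with hp
      have hps : (setOf p).Infinite := hinf
      have hpj : p (Nat.nth p i) := Nat.nth_mem_of_infinite hps i
      have hcnt : cntz x (Nat.nth p i + 1) = i + 1 := by
        unfold cntz
        rw [Nat.count_succ, if_pos hpj, Nat.count_nth (fun hf => absurd hf hps)]
      set j := Nat.nth p i + 1 with hj
      have e1 : eps (FF x b) j = dig x b j :=
        digitReal_eps (dig01 x b) (dig_inf x hinf b) j (by omega)
      have e2 : eps (FF x b') j = dig x b' j :=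
        digitReal_eps (dig01 x b') (dig_inf x hinf b') j (by omega)
      rw [hbb] at e1
      have hdd : dig x b j = dig x b' j := e1.symm.trans e2
      unfold dig at hdd
      rw [hcnt] at hdd
      simp only [Nat.add_sub_cancel] at hdd
      rcases eps_mem x j with h|h <;> rw [h] at hdd <;>
        cases hbi : b i <;> cases hbi' : b' i <;>
          simp [hbi, hbi'] at hdd hi
    apply not_countable_funBool
    have hsub : Countable ↥(LocalLevelSet x) := hC.to_subtype
    let G : (ℕ → Bool) → ↥(LocalLevelSet x) := fun b => ⟨FF x b, hmem b⟩
    have hGinj : Function.Injective G := fun a b h => hinj (congrArg Subtype.val h)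
    exact Countable.of_equiv _ (Equiv.ofInjective G hGinj).symm
end

section
/- If x₀ is a balanced dyadic rational of order m, then the image J(x₀) = T(I(x₀)) is an interval of length (2/3)·4^{-m}, namely J(x₀) = [T(x₀), T(x₀) + (2/3)·4^{-m}]. -/
open Set

lemma phi_nonneg (x : ℝ) : 0 ≤ phi x := by
  unfold phi
  have h1 := Int.fract_nonneg x
  have h2 := Int.fract_lt_one x
  simp only [le_min_iff]
  constructor <;> linarith

lemma phi_le_half (x : ℝ) : phi x ≤ 1/2 := by
  unfold phi
  rcases le_or_gt (Int.fract x) (1/2) with h | h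
  · exact le_trans (min_le_left _ _) h
  · exact le_trans (min_le_right _ _) (by linarith)

lemma phi_intCast (n : ℤ) : phi (n : ℝ) = 0 := by
  unfold phi; simp [Int.fract_intCast]

lemma phi_int_add (n : ℤ) (x : ℝ) : phi ((n : ℝ) + x) = phi x := by
  unfold phi; rw [Int.fract_intCast_add]

lemma phi_neg (x : ℝ) : phi (-x) = phi x := by
  unfold phi
  rcases eq_or_ne (Int.fract x) 0 with h | h
  · obtain ⟨n, rfl⟩ : ∃ n : ℤ, x = n := ⟨⌊x⌋, by
      have := Int.fract_add_floor x; unfold Int.fract at h; linarith⟩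
    rw [show -(n:ℝ) = ((-n : ℤ) : ℝ) by push_cast; ring, Int.fract_intCast, h]
  · rw [Int.fract_neg h]
    ring_nf
    rw [min_comm]

lemma phi_eq_left {p : ℤ} {z : ℝ} (h1 : (p:ℝ) ≤ z) (h2 : z ≤ p + 1/2) :
    phi z = z - p := by
  have hf : Int.fract z = z - p := by
    rw [Int.fract_eq_iff]
    exact ⟨by linarith, by linarith, ⟨p, by ring⟩⟩
  unfold phi
  rw [hf, min_eq_left (by linarith)]

lemma phi_eq_right {p : ℤ} {z : ℝ} (h1 : (p:ℝ) + 1/2 ≤ z) (h2 : z ≤ p + 1) :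
    phi z = (p:ℝ) + 1 - z := by
  have : phi z = phi ((p+1 : ℤ) + (-z)) := by rw [phi_int_add, phi_neg]
  rw [this, phi_eq_left (p := 0) (by push_cast; linarith) (by push_cast; linarith)]
  push_cast; ring

lemma phi_le_abs_sub_int (x : ℝ) (n : ℤ) : phi x ≤ |x - n| := by
  rcases le_or_gt (n:ℝ) x with h | h
  · rcases le_or_gt x (⌊x⌋ + 1/2) with h2 | h2
    · -- phi x = fract x ≤ x - n since n ≤ ⌊x⌋
      have hn : (n:ℝ) ≤ ⌊x⌋ := by
        exact_mod_cast Int.le_floor.2 (by exact_mod_cast h)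
      have : phi x ≤ Int.fract x := min_le_left _ _
      rw [abs_of_nonneg (by linarith)]
      unfold Int.fract at this
      linarith
    · have : phi x ≤ 1 - Int.fract x := min_le_right _ _
      unfold Int.fract at this
      have hn : (n:ℝ) ≤ ⌊x⌋ := by
        exact_mod_cast Int.le_floor.2 (by exact_mod_cast h)
      rw [abs_of_nonneg (by linarith)]
      linarith
  · -- x < n, so n ≥ ⌊x⌋+1
    have hn : (⌊x⌋:ℝ) + 1 ≤ n := by
      have : ⌊x⌋ + 1 ≤ n := Int.lt_iff_add_one_le.1 (by exact_mod_cast Int.floor_lt.2 h)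
      exact_mod_cast this
    have h1 : phi x ≤ 1 - Int.fract x := min_le_right _ _
    unfold Int.fract at h1
    rw [abs_of_nonpos (by linarith)]
    linarith

lemma phi_lipschitz : LipschitzWith 1 phi := by
  rw [lipschitzWith_iff_dist_le_mul]
  intro x y
  rw [Real.dist_eq, Real.dist_eq]
  simp only [NNReal.coe_one, one_mul]
  rw [abs_sub_le_iff]
  have key : ∀ a b : ℝ, phi a - phi b ≤ |a - b| := by
    intro a b
    have h1 : phi a ≤ |a - ⌊b + 1/2⌋| := phi_le_abs_sub_int a _
    have h2 : phi b = |b - ⌊b + 1/2⌋| := by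
      set p := ⌊b + 1/2⌋ with hp
      have hb1 : (p:ℝ) ≤ b + 1/2 := Int.floor_le _
      have hb2 : b + 1/2 < p + 1 := Int.lt_floor_add_one _
      rcases le_or_gt (p:ℝ) b with hc | hc
      · rw [phi_eq_left hc (by linarith), abs_of_nonneg (by linarith)]
      · rw [show b = ((p-1 : ℤ):ℝ) + (b - (p-1)) by push_cast; ring, phi_int_add,
          phi_eq_right (p := 0) (by push_cast; linarith) (by push_cast; linarith),
          abs_of_nonpos (by push_cast; linarith)]
        push_cast; ring
    calc phi a - phi b ≤ |a - ⌊b+1/2⌋| - |b - ⌊b+1/2⌋| := by rw [← h2]; linarith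
      _ ≤ |a - b| := by
          have := abs_sub_abs_le_abs_sub (a - (⌊b+1/2⌋:ℝ)) (b - (⌊b+1/2⌋:ℝ))
          simpa using this
  exact ⟨key x y, by have := key y x; rwa [abs_sub_comm] at this⟩

lemma summable_T (x : ℝ) : Summable (fun n : ℕ => (1/2:ℝ)^n * phi (2^n * x)) := by
  apply Summable.of_nonneg_of_le
    (fun n => mul_nonneg (by positivity) (phi_nonneg _))
    (fun n => ?_) (summable_geometric_of_lt_one (by norm_num) (by norm_num : (1/2:ℝ) < 1))
  calc (1/2:ℝ)^n * phi (2^n * x) ≤ (1/2:ℝ)^n * 1 := by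
        exact mul_le_mul_of_nonneg_left (le_trans (phi_le_half _) (by norm_num)) (by positivity)
    _ = (1/2:ℝ)^n := mul_one _

lemma T_continuous : Continuous T := by
  apply continuous_tsum (u := fun n : ℕ => (1/2:ℝ)^n)
  · intro n
    exact (continuous_const.mul ((phi_lipschitz.continuous).comp (continuous_const.mul continuous_id)))
  · exact summable_geometric_of_lt_one (by norm_num) (by norm_num)
  · intro n x
    rw [Real.norm_eq_abs, abs_mul, abs_of_nonneg (phi_nonneg _), abs_of_nonneg (by positivity : (0:ℝ) ≤ (1/2)^n)]
    calc (1/2:ℝ)^n * phi (2^n * x) ≤ (1/2:ℝ)^n * 1 :=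
          mul_le_mul_of_nonneg_left (le_trans (phi_le_half _) (by norm_num)) (by positivity)
      _ = (1/2:ℝ)^n := mul_one _

lemma T_nonneg (x : ℝ) : 0 ≤ T x :=
  tsum_nonneg (fun n => mul_nonneg (by positivity) (phi_nonneg _))

lemma fract_two_mul (y : ℝ) :
    Int.fract (2*y) = if Int.fract y < 1/2 then 2 * Int.fract y else 2 * Int.fract y - 1 := by
  have h0 := Int.fract_nonneg y
  have h1 := Int.fract_lt_one y
  have key : 2*y = (2*⌊y⌋ : ℤ) + 2 * Int.fract y := by
    unfold Int.fract; push_cast; ring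
  rw [key, Int.fract_intCast_add]
  split_ifs with h
  · exact Int.fract_eq_self.2 ⟨by linarith, by linarith⟩
  · have e : Int.fract (2*Int.fract y) = Int.fract (2*Int.fract y - 1) := by
      rw [show 2*Int.fract y - 1 = 2*Int.fract y - ((1:ℤ):ℝ) by push_cast; ring,
        Int.fract_sub_intCast]
    rw [e]
    exact Int.fract_eq_self.2 ⟨by linarith, by linarith⟩

lemma phi_pair (y : ℝ) : phi y + phi (2*y) / 2 ≤ 1/2 := by
  have h0 := Int.fract_nonneg y
  have h1 := Int.fract_lt_one y
  have h2 := fract_two_mul y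
  have hphiy : phi y = min (Int.fract y) (1 - Int.fract y) := rfl
  have hphi2 : phi (2*y) = min (Int.fract (2*y)) (1 - Int.fract (2*y)) := rfl
  rcases le_or_gt (phi y) (1/4) with h | h
  · have := phi_le_half (2*y); linarith
  · -- fract y ∈ (1/4, 3/4)
    have e1' : phi y ≤ Int.fract y := by rw [hphiy]; exact min_le_left _ _
    have e2' : phi y ≤ 1 - Int.fract y := by rw [hphiy]; exact min_le_right _ _
    have hf1 : 1/4 < Int.fract y := lt_of_lt_of_le h e1'
    have hf2 : Int.fract y < 3/4 := by linarith [lt_of_lt_of_le h e2']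
    rcases lt_or_ge (Int.fract y) (1/2) with hc | hc
    · rw [if_pos hc] at h2
      have e1 : phi y ≤ Int.fract y := by rw [hphiy]; exact min_le_left _ _
      have e2 : phi (2*y) ≤ 1 - Int.fract (2*y) := by rw [hphi2]; exact min_le_right _ _
      rw [h2] at e2; linarith
    · rw [if_neg (not_lt.2 hc)] at h2
      have e1 : phi y ≤ 1 - Int.fract y := by rw [hphiy]; exact min_le_right _ _
      have e2 : phi (2*y) ≤ Int.fract (2*y) := by rw [hphi2]; exact min_le_left _ _
      rw [h2] at e2; linarith

lemma T_le_two_thirds (x : ℝ) : T x ≤ 2/3 := by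
  set f : ℕ → ℝ := fun n => (1/2:ℝ)^n * phi (2^n * x) with hf
  have hsum := summable_T x
  have hse : Summable (fun k => f (2*k)) := (summable_T x).comp_injective (fun a b => by omega)
  have hso : Summable (fun k => f (2*k+1)) := (summable_T x).comp_injective (fun a b => by omega)
  have hT : T x = ∑' k, f (2*k) + ∑' k, f (2*k+1) := (tsum_even_add_odd hse hso).symm
  rw [hT, ← Summable.tsum_add hse hso]
  have hbound : ∀ k : ℕ, f (2*k) + f (2*k+1) ≤ (1/4:ℝ)^k * (1/2) := by
    intro k
    have e1 : f (2*k) = (1/4:ℝ)^k * phi (2^(2*k) * x) := by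
      rw [hf]; simp only []
      congr 1
      rw [show (1/4:ℝ) = (1/2)^2 by norm_num, ← pow_mul, mul_comm 2 k]
    have e2 : f (2*k+1) = (1/4:ℝ)^k * (phi (2 * (2^(2*k) * x)) / 2) := by
      rw [hf]; simp only []
      rw [pow_succ, pow_succ, show (1/4:ℝ) = (1/2)^2 by norm_num, ← pow_mul, mul_comm 2 k]
      ring_nf
    rw [e1, e2, ← mul_add]
    exact mul_le_mul_of_nonneg_left (phi_pair _) (by positivity)
  calc ∑' k, (f (2*k) + f (2*k+1)) ≤ ∑' k : ℕ, (1/4:ℝ)^k * (1/2) := by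
        apply Summable.tsum_le_tsum hbound (hse.add hso)
        exact (summable_geometric_of_lt_one (by norm_num) (by norm_num)).mul_right _
    _ = 2/3 := by
        rw [tsum_mul_right, tsum_geometric_of_lt_one (by norm_num) (by norm_num)]
        norm_num

lemma phi_zero : phi 0 = 0 := by simp [phi]

lemma T_zero : T 0 = 0 := by
  unfold T
  convert tsum_zero with n
  rw [mul_zero, phi_zero, mul_zero]

lemma fract_pow_two_third (n : ℕ) :
    Int.fract ((2:ℝ)^n * (1/3)) = 1/3 ∨ Int.fract ((2:ℝ)^n * (1/3)) = 2/3 := by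
  induction n with
  | zero =>
    left
    rw [pow_zero, one_mul]
    exact Int.fract_eq_self.2 ⟨by norm_num, by norm_num⟩
  | succ n ih =>
    have key : (2:ℝ)^(n+1) * (1/3) = 2 * ((2:ℝ)^n * (1/3)) := by ring
    rw [key, fract_two_mul]
    rcases ih with h | h
    · right; rw [if_pos (by rw [h]; norm_num), h]; norm_num
    · left; rw [if_neg (by rw [h]; norm_num), h]; norm_num

lemma T_third : T (1/3) = 2/3 := by
  unfold T
  have : ∀ n : ℕ, (1/2:ℝ)^n * phi (2^n * (1/3)) = (1/3) * (1/2)^n := by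
    intro n
    have : phi ((2:ℝ)^n * (1/3)) = 1/3 := by
      unfold phi
      rcases fract_pow_two_third n with h | h <;> rw [h] <;> norm_num
    rw [this]; ring
  simp_rw [this]
  rw [tsum_mul_left, tsum_geometric_two]
  norm_num

lemma phi_slope (m k n : ℕ) (x₀ : ℝ) (hx₀ : x₀ = (k:ℝ)/4^m) (hn : n < 2*m)
    (u : ℝ) (hu0 : 0 ≤ u) (hu1 : u ≤ 2^n / 4^m) :
    phi (2^n * x₀ + u) = phi (2^n * x₀) + ((-1:ℤ)^((eps x₀ (n+1)).toNat) : ℝ) * u := by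
  have h4 : (4:ℝ)^m = 2^(2*m) := by
    rw [show (4:ℝ) = 2^2 by norm_num, ← pow_mul]
  set y := (2:ℝ)^n * x₀ with hy
  set j := ⌊(2:ℝ)^(n+1) * x₀⌋ with hj
  have h2y : (2:ℝ)^(n+1) * x₀ = 2 * y := by rw [hy, pow_succ]; ring
  have hj_le : (j:ℝ) ≤ 2*y := by rw [← h2y]; exact Int.floor_le _
  set q := 2*m - 1 - n with hq
  have hqn : q + (n+1) = 2*m := by omega
  have key : 2*y = (k:ℝ)/2^q := by
    rw [← h2y, hx₀, h4, ← hqn, pow_add]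
    field_simp
    rw [pow_add, pow_succ]
    ring
  have h2u : 2*u ≤ 1/2^q := by
    have : (2:ℝ)*(2^n/4^m) = 1/2^q := by
      rw [h4, ← hqn, pow_add, pow_succ]
      field_simp
    linarith [mul_le_mul_of_nonneg_left hu1 (by norm_num : (0:ℝ) ≤ 2)]
  have hup : 2*(y+u) ≤ (j:ℝ)+1 := by
    have kb : (k:ℝ)/2^q < (j:ℝ)+1 := by rw [← key, ← h2y]; exact Int.lt_floor_add_one _
    have kb2 : (k:ℝ) < 2^q*((j:ℝ)+1) := by
      rw [div_lt_iff₀ (by positivity)] at kb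
      linarith [kb]
    have kbz : (k:ℤ) < 2^q*(j+1) := by exact_mod_cast kb2
    have kbz2 : (k:ℤ) + 1 ≤ 2^q*(j+1) := kbz
    have kb3 : (k:ℝ) + 1 ≤ 2^q*((j:ℝ)+1) := by exact_mod_cast kbz2
    have : (k:ℝ)/2^q + 1/2^q ≤ (j:ℝ)+1 := by
      rw [← add_div, div_le_iff₀ (by positivity)]
      linarith [kb3]
    calc 2*(y+u) = 2*y + 2*u := by ring
      _ ≤ (k:ℝ)/2^q + 1/2^q := by rw [key]; linarith
      _ ≤ (j:ℝ)+1 := this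
  have heps : eps x₀ (n+1) = j % 2 := rfl
  rcases Int.even_or_odd j with ⟨p, hp⟩ | ⟨p, hp⟩
  · -- j = p + p, slope +1
    have hpy : (p:ℝ) ≤ y := by
      have : ((p:ℝ) + p) ≤ 2*y := by
        have : ((j:ℝ)) = p + p := by exact_mod_cast congrArg (Int.cast : ℤ → ℝ) hp
        linarith [hj_le, this.symm.le, this.le]
      linarith
    have hpu : y + u ≤ (p:ℝ) + 1/2 := by
      have hje : ((j:ℝ)) = p + p := by exact_mod_cast congrArg (Int.cast : ℤ → ℝ) hp
      rw [hje] at hup; linarith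
    have heps0 : (eps x₀ (n+1)).toNat = 0 := by
      rw [heps, hp]; omega
    rw [phi_eq_left (p := p) (by linarith) (by linarith),
        phi_eq_left (p := p) hpy (by linarith), heps0]
    push_cast; ring
  · -- j = 2p+1, slope -1
    have hje : ((j:ℝ)) = 2*p + 1 := by exact_mod_cast congrArg (Int.cast : ℤ → ℝ) hp
    have hpy : (p:ℝ) + 1/2 ≤ y := by rw [hje] at hj_le; linarith
    have hpu : y + u ≤ (p:ℝ) + 1 := by rw [hje] at hup; linarith
    have heps1 : (eps x₀ (n+1)).toNat = 1 := by
      rw [heps, hp]; omega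
    rw [phi_eq_right (p := p) (by linarith) (by linarith),
        phi_eq_right (p := p) hpy (by linarith), heps1]
    push_cast; ring

lemma T_affine (m kk : ℕ) (x₀ : ℝ) (hx₀ : x₀ = (kk:ℝ)/4^m) (hD : D (2*m) x₀ = 0)
    (t : ℝ) (ht0 : 0 ≤ t) (ht1 : t ≤ 1) :
    T (x₀ + t/4^m) = T x₀ + (1/4^m) * T t := by
  have h4 : (4:ℝ)^m = 2^(2*m) := by
    rw [show (4:ℝ) = 2^2 by norm_num, ← pow_mul]
  -- tail of x₀ + t/4^m
  have tail1 : ∀ i : ℕ, (1/2:ℝ)^(i+2*m) * phi (2^(i+2*m) * (x₀ + t/4^m))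
      = (1/4^m) * ((1/2:ℝ)^i * phi (2^i * t)) := by
    intro i
    have e1 : (2:ℝ)^(i+2*m) * (x₀ + t/4^m) = ((kk * 2^i : ℤ):ℝ) + 2^i * t := by
      rw [hx₀, h4]
      push_cast
      rw [pow_add]
      field_simp
    have e2 : (1/2:ℝ)^(i+2*m) = (1/4^m) * (1/2:ℝ)^i := by
      rw [pow_add, h4]
      field_simp
      ring_nf
      rw [← mul_pow]
      norm_num
    rw [e1, phi_int_add, e2]
    ring
  -- tail of x₀
  have tail0 : ∀ i : ℕ, (1/2:ℝ)^(i+2*m) * phi (2^(i+2*m) * x₀) = 0 := by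
    intro i
    have e1 : (2:ℝ)^(i+2*m) * x₀ = ((kk * 2^i : ℤ):ℝ) := by
      rw [hx₀, h4]
      push_cast
      rw [pow_add]
      field_simp
    rw [e1, phi_intCast, mul_zero]
  have hz : (∑' i : ℕ, (1/2:ℝ)^(i+2*m) * phi (2^(i+2*m) * x₀)) = ∑' _ : ℕ, (0:ℝ) :=
    tsum_congr tail0
  -- head terms
  have head : ∀ n ∈ Finset.range (2*m),
      (1/2:ℝ)^n * phi (2^n * (x₀ + t/4^m))
      = (1/2:ℝ)^n * phi (2^n * x₀) + ((-1:ℤ)^((eps x₀ (n+1)).toNat) : ℝ) * (t/4^m) := by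
    intro n hn
    rw [Finset.mem_range] at hn
    have hu0 : (0:ℝ) ≤ 2^n * (t/4^m) := by positivity
    have hu1 : 2^n * (t/4^m) ≤ 2^n / 4^m := by
      rw [mul_div_assoc']
      have h2n : (2:ℝ)^n * t ≤ 2^n := by
        nlinarith [pow_pos (show (0:ℝ) < 2 by norm_num) n]
      gcongr
    have e1 : (2:ℝ)^n * (x₀ + t/4^m) = 2^n * x₀ + 2^n * (t/4^m) := by ring
    rw [e1, phi_slope m kk n x₀ hx₀ hn _ hu0 hu1]
    have e2 : (1/2:ℝ)^n * (2^n * (t/4^m)) = t/4^m := by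
      rw [← mul_assoc, ← mul_pow]
      norm_num
    push_cast
    linear_combination ((-1:ℝ)^((eps x₀ (n+1)).toNat)) * e2
  -- sum of signs is D = 0
  have signs : ∑ n ∈ Finset.range (2*m), ((-1:ℤ)^((eps x₀ (n+1)).toNat) : ℝ) = 0 := by
    have : ∑ n ∈ Finset.range (2*m), ((-1:ℤ)^((eps x₀ (n+1)).toNat)) = D (2*m) x₀ := by
      unfold D
      rw [← Finset.Ico_add_one_right_eq_Icc, Finset.sum_Ico_eq_sum_range]
      refine Finset.sum_congr (by norm_num) (fun n _ => by rw [Nat.add_comm 1 n])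
    calc ∑ n ∈ Finset.range (2*m), ((-1:ℤ)^((eps x₀ (n+1)).toNat) : ℝ)
        = ((∑ n ∈ Finset.range (2*m), ((-1:ℤ)^((eps x₀ (n+1)).toNat)) : ℤ) : ℝ) := by push_cast; rfl
      _ = ((D (2*m) x₀ : ℤ) : ℝ) := by rw [this]
      _ = 0 := by rw [hD]; norm_num
  -- assemble
  have hs1 := Summable.sum_add_tsum_nat_add (f := fun n => (1/2:ℝ)^n * phi (2^n * (x₀+t/4^m))) (2*m)
    (summable_T _)
  have hs0 := Summable.sum_add_tsum_nat_add (f := fun n => (1/2:ℝ)^n * phi (2^n * x₀)) (2*m)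
    (summable_T _)
  have hT1 : T (x₀ + t/4^m)
      = ∑ n ∈ Finset.range (2*m), (1/2:ℝ)^n * phi (2^n * (x₀+t/4^m))
        + ∑' i : ℕ, (1/2:ℝ)^(i+2*m) * phi (2^(i+2*m) * (x₀+t/4^m)) := by
    rw [hs1]; rfl
  have hT0 : T x₀ = ∑ n ∈ Finset.range (2*m), (1/2:ℝ)^n * phi (2^n * x₀) := by
    have : T x₀ = ∑ n ∈ Finset.range (2*m), (1/2:ℝ)^n * phi (2^n * x₀)
        + ∑' i : ℕ, (1/2:ℝ)^(i+2*m) * phi (2^(i+2*m) * x₀) := by rw [hs0]; rfl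
    rw [this, hz, tsum_zero, add_zero]
  have htail : ∑' i : ℕ, (1/2:ℝ)^(i+2*m) * phi (2^(i+2*m) * (x₀+t/4^m)) = (1/4^m) * T t := by
    rw [tsum_congr tail1, tsum_mul_left]
    rfl
  rw [hT1, htail, Finset.sum_congr rfl head, Finset.sum_add_distrib, ← Finset.sum_mul, signs,
    zero_mul, add_zero, hT0]

theorem takagi_hump_image (m : ℕ) (x₀ : ℝ) (h : BalancedDyadic m x₀) :
    T '' Set.Icc x₀ (x₀ + 1/4^m) = Set.Icc (T x₀) (T x₀ + (2/3) * (1/4^m)) := by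
  obtain ⟨⟨hx0, hx1⟩, ⟨k, hk⟩, hD⟩ := h
  have h4pos : (0:ℝ) < 4^m := by positivity
  apply Set.Subset.antisymm
  · rintro y ⟨x, ⟨hxl, hxr⟩, rfl⟩
    set t := (x - x₀) * 4^m with htdef
    have ht0 : 0 ≤ t := mul_nonneg (by linarith) (by positivity)
    have ht1 : t ≤ 1 := by
      rw [htdef]
      have : x - x₀ ≤ 1/4^m := by linarith
      calc (x - x₀) * 4^m ≤ (1/4^m) * 4^m := by
            exact mul_le_mul_of_nonneg_right this (le_of_lt h4pos)
        _ = 1 := by field_simp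
    have hx : x = x₀ + t/4^m := by
      rw [htdef]
      field_simp
      ring
    rw [hx, T_affine m k x₀ hk hD t ht0 ht1]
    constructor
    · have := T_nonneg t
      nlinarith [h4pos]
    · have := T_le_two_thirds t
      have h1 : (0:ℝ) < 1/4^m := by positivity
      nlinarith [h1]
  · rintro y ⟨hyl, hyr⟩
    set c := (y - T x₀) * 4^m with hcdef
    have hc0 : 0 ≤ c := mul_nonneg (by linarith) (le_of_lt h4pos)
    have hc1 : c ≤ 2/3 := by
      rw [hcdef]
      have : y - T x₀ ≤ (2/3) * (1/4^m) := by linarith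
      calc (y - T x₀) * 4^m ≤ ((2/3) * (1/4^m)) * 4^m :=
            mul_le_mul_of_nonneg_right this (le_of_lt h4pos)
        _ = 2/3 := by field_simp
    have hIVT : Set.Icc (T 0) (T (1/3)) ⊆ T '' Set.Icc 0 (1/3) :=
      intermediate_value_Icc (by norm_num) (T_continuous.continuousOn)
    have hc : c ∈ Set.Icc (T 0) (T (1/3)) := by
      rw [T_zero, T_third]
      exact ⟨hc0, hc1⟩
    obtain ⟨t, ⟨ht0, ht13⟩, hTt⟩ := hIVT hc
    have ht1 : t ≤ 1 := le_trans ht13 (by norm_num)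
    refine ⟨x₀ + t/4^m, ⟨?_, ?_⟩, ?_⟩
    · have : 0 ≤ t/4^m := div_nonneg ht0 (le_of_lt h4pos)
      linarith
    · have : t/4^m ≤ 1/4^m := by
        gcongr
      linarith
    · rw [T_affine m k x₀ hk hD t ht0 ht1, hTt, hcdef]
      field_simp
      ring
end
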